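/- For all mass functions m1, m2, m3 on Ω, max_{A⊆Ω} |q_{m1 ⊚∪ m3}(A) − q_{m2 ⊚∪ m3}(A)| ≤ max_{A⊆Ω} |q_{m1}(A) − q_{m2}(A)|. Consequently the L_∞ norm based distance between commonality functions is 1-Lipschitz with respect to disjunctive combination with a fixed mass function. -/
import Mathlib


open Finset

/-- A mass function on a finite frame `Ω`: nonnegative and sums to one over all subsets. -/
def IsMass {Ω : Type*} [Fintype Ω] (m : Finset Ω → ℝ) : Prop :=
  (∀ A, 0 ≤ m A) ∧ ∑ A : Finset Ω, m A = 1

/-- Commonality (inclusion functional): `q m A = ∑_{E ⊇ A} m E`. -/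
def commonality {Ω : Type*} [Fintype Ω] [DecidableEq Ω] (m : Finset Ω → ℝ) (A : Finset Ω) : ℝ :=
  ∑ E : Finset Ω, if A ⊆ E then m E else 0

/-- Plausibility (hitting functional): `pl m A = ∑_{E ∩ A ≠ ∅} m E`. -/
def plaus {Ω : Type*} [Fintype Ω] [DecidableEq Ω] (m : Finset Ω → ℝ) (A : Finset Ω) : ℝ :=
  ∑ E : Finset Ω, if E ∩ A ≠ ∅ then m E else 0

/-- Implicability: `b m A = ∑_{E ⊆ A} m E`. -/
def implic {Ω : Type*} [Fintype Ω] [DecidableEq Ω] (m : Finset Ω → ℝ) (A : Finset Ω) : ℝ :=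
  ∑ E : Finset Ω, if E ⊆ A then m E else 0

/-- Conjunctive combination: `(m1 ⊚∩ m2)(E) = ∑_{A ∩ B = E} m1 A * m2 B`. -/
def conjC {Ω : Type*} [Fintype Ω] [DecidableEq Ω] (m1 m2 : Finset Ω → ℝ) (E : Finset Ω) : ℝ :=
  ∑ A : Finset Ω, ∑ B : Finset Ω, if A ∩ B = E then m1 A * m2 B else 0

/-- Disjunctive combination: `(m1 ⊚∪ m2)(E) = ∑_{A ∪ B = E} m1 A * m2 B`. -/
def disjC {Ω : Type*} [Fintype Ω] [DecidableEq Ω] (m1 m2 : Finset Ω → ℝ) (E : Finset Ω) : ℝ :=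
  ∑ A : Finset Ω, ∑ B : Finset Ω, if A ∪ B = E then m1 A * m2 B else 0

/-- Categorical mass function `m_A`. -/
def categorical {Ω : Type*} [Fintype Ω] [DecidableEq Ω] (A : Finset Ω) : Finset Ω → ℝ :=
  fun E => if E = A then 1 else 0

lemma commonality_disjC {Ω : Type*} [Fintype Ω] [DecidableEq Ω] (m m3 : Finset Ω → ℝ)
    (A : Finset Ω) :
    commonality (disjC m m3) A = ∑ B : Finset Ω, m3 B * commonality m (A \ B) := by
  unfold commonality disjC
  have h1 : ∀ E : Finset Ω,
      (if A ⊆ E then ∑ C : Finset Ω, ∑ B : Finset Ω, (if C ∪ B = E then m C * m3 B else 0)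
        else 0)
      = ∑ C : Finset Ω, ∑ B : Finset Ω,
          (if C ∪ B = E then (if A ⊆ E then m C * m3 B else 0) else 0) := by
    intro E; split <;> simp_all
  simp only [h1]
  rw [Finset.sum_comm]
  have h2 : ∀ C : Finset Ω,
      (∑ E : Finset Ω, ∑ B : Finset Ω,
        (if C ∪ B = E then (if A ⊆ E then m C * m3 B else 0) else 0))
      = ∑ B : Finset Ω, (if A ⊆ C ∪ B then m C * m3 B else 0) := by
    intro C
    rw [Finset.sum_comm]
    refine Finset.sum_congr rfl fun B _ => ?_
    rw [Finset.sum_ite_eq]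
    simp
  simp only [h2]
  rw [Finset.sum_comm]
  refine Finset.sum_congr rfl fun B _ => ?_
  rw [Finset.mul_sum]
  refine Finset.sum_congr rfl fun C _ => ?_
  have hc : A ⊆ C ∪ B ↔ A \ B ⊆ C := by
    rw [Finset.union_comm, ← Finset.le_iff_subset, ← Finset.le_iff_subset, sdiff_le_iff,
      Finset.sup_eq_union]
  simp only [hc]
  split <;> ring

/-- For all mass functions `m1, m2, m3`,
`max_{A⊆Ω} |q_{m1 ⊚∪ m3}(A) − q_{m2 ⊚∪ m3}(A)| ≤ max_{A⊆Ω} |q_{m1}(A) − q_{m2}(A)|`,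
i.e. the `L_∞` distance between commonalities is 1-Lipschitz w.r.t. disjunctive
combination with a fixed mass function. -/
theorem linf_commonality_disj_nonexpansive {Ω : Type*} [Fintype Ω] [DecidableEq Ω]
    (m1 m2 m3 : Finset Ω → ℝ) (h1 : IsMass m1) (h2 : IsMass m2) (h3 : IsMass m3) :
    (Finset.univ : Finset (Finset Ω)).sup' Finset.univ_nonempty
        (fun A => |commonality (disjC m1 m3) A - commonality (disjC m2 m3) A|) ≤
      (Finset.univ : Finset (Finset Ω)).sup' Finset.univ_nonempty
        (fun A => |commonality m1 A - commonality m2 A|) := by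
  set M := (Finset.univ : Finset (Finset Ω)).sup' Finset.univ_nonempty
      (fun A => |commonality m1 A - commonality m2 A|) with hM
  refine Finset.sup'_le _ _ fun A _ => ?_
  rw [commonality_disjC, commonality_disjC, ← Finset.sum_sub_distrib]
  refine (Finset.abs_sum_le_sum_abs _ _).trans ?_
  have key : ∀ B ∈ (Finset.univ : Finset (Finset Ω)),
      |m3 B * commonality m1 (A \ B) - m3 B * commonality m2 (A \ B)| ≤ m3 B * M := by
    intro B _
    rw [← mul_sub, abs_mul, abs_of_nonneg (h3.1 B)]
    exact mul_le_mul_of_nonneg_left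
      (Finset.le_sup' (fun A => |commonality m1 A - commonality m2 A|) (Finset.mem_univ (A \ B)))
      (h3.1 B)
  refine (Finset.sum_le_sum key).trans ?_
  rw [← Finset.sum_mul, h3.2, one_mul]
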